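/- arXiv:2108.07082 — 2 statements merged into one kernel-verified Lean document; each statement's English description precedes it below -/
import Mathlib

section
/- For each fixed δ ∈ (0,1), the function ε ↦ δ(1−δ²)²/(ε(1−δε)²) tends to +∞ as ε → 0⁺. Consequently the supremum over z,w ∈ H of |K_H(w,z)|/K_H(z,z) is infinite, i.e., the Hartogs triangle does not satisfy property BR. -/
open Complex Filter Set

/-- The Hartogs triangle. -/
def HT : Set (ℂ × ℂ) := {z | ‖z.2‖ < ‖z.1‖ ∧ ‖z.1‖ < 1}

/-- The Bergman kernel of the Hartogs triangle. -/
noncomputable def KH (w z : ℂ × ℂ) : ℂ :=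
  w.1 * (starRingEnd ℂ) z.1 /
    ((Real.pi : ℂ) ^ 2 * (w.1 * (starRingEnd ℂ) z.1 - w.2 * (starRingEnd ℂ) z.2) ^ 2 *
      (1 - w.1 * (starRingEnd ℂ) z.1) ^ 2)

lemma KH_real (a b : ℝ) :
    KH ((a:ℂ), 0) ((b:ℂ), 0) = (((a*b) / (Real.pi ^ 2 * (a*b)^2 * (1 - a*b)^2) : ℝ) : ℂ) := by
  simp [KH, Complex.conj_ofReal]

lemma tendsto_part (δ : ℝ) (hδ0 : 0 < δ) (hδ1 : δ < 1) :
    Tendsto (fun ε : ℝ => δ * (1 - δ ^ 2) ^ 2 / (ε * (1 - δ * ε) ^ 2))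
        (nhdsWithin 0 (Set.Ioi 0)) atTop := by
  have h1 : 0 < 1 - δ ^ 2 := by nlinarith
  have hC : 0 < δ * (1 - δ ^ 2) ^ 2 := by positivity
  have hg : Tendsto (fun ε : ℝ => ε * (1 - δ * ε) ^ 2) (nhdsWithin 0 (Set.Ioi 0))
      (nhdsWithin 0 (Set.Ioi 0)) := by
    rw [tendsto_nhdsWithin_iff]
    constructor
    · have : ContinuousAt (fun ε : ℝ => ε * (1 - δ * ε) ^ 2) 0 := by fun_prop
      have h0 : (fun ε : ℝ => ε * (1 - δ * ε) ^ 2) 0 = 0 := by norm_num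
      simpa [h0] using tendsto_nhdsWithin_of_tendsto_nhds this.tendsto
    · filter_upwards [self_mem_nhdsWithin,
        eventually_nhdsWithin_of_eventually_nhds
          (eventually_lt_nhds (by positivity : (0:ℝ) < 1/δ))] with ε hε hε'
      have hlt : δ * ε < 1 := by
        rw [lt_div_iff₀ hδ0] at hε'
        nlinarith
      exact mul_pos (mem_Ioi.mp hε) (pow_pos (by linarith) 2)
  have := hg.inv_tendsto_nhdsGT_zero
  have h2 := this.const_mul_atTop hC
  simpa [div_eq_mul_inv] using h2

theorem stmt1 (δ : ℝ) (hδ0 : 0 < δ) (hδ1 : δ < 1) :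
    Tendsto (fun ε : ℝ => δ * (1 - δ ^ 2) ^ 2 / (ε * (1 - δ * ε) ^ 2))
        (nhdsWithin 0 (Set.Ioi 0)) atTop
      ∧ ¬ BddAbove {r : ℝ | ∃ z ∈ HT, ∃ w ∈ HT, r = ‖KH w z‖ / (KH z z).re} := by
  refine ⟨tendsto_part δ hδ0 hδ1, ?_⟩
  rintro ⟨M, hM⟩
  have hev : ∀ᶠ ε : ℝ in nhdsWithin 0 (Set.Ioi 0),
      M < δ * (1 - δ ^ 2) ^ 2 / (ε * (1 - δ * ε) ^ 2) ∧ ε ∈ Set.Ioo (0:ℝ) 1 := by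
    filter_upwards [(tendsto_part δ hδ0 hδ1).eventually_gt_atTop M,
      Ioo_mem_nhdsGT_of_mem (by norm_num : (0:ℝ) ∈ Set.Ico (0:ℝ) 1)] with ε h1 h2
    exact ⟨h1, h2⟩
  obtain ⟨ε, hfε, hε0, hε1⟩ := hev.exists
  set f := δ * (1 - δ ^ 2) ^ 2 / (ε * (1 - δ * ε) ^ 2) with hf
  have hεδ : ε * δ < 1 := by nlinarith
  have hδδ : δ * δ < 1 := by nlinarith
  have hπ : (0:ℝ) < Real.pi := Real.pi_pos
  have hmem : f ∈ {r : ℝ | ∃ z ∈ HT, ∃ w ∈ HT, r = ‖KH w z‖ / (KH z z).re} := by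
    refine ⟨((δ:ℂ), 0), ?_, ((ε:ℂ), 0), ?_, ?_⟩
    · simp only [HT, Set.mem_setOf_eq]
      simp [Complex.norm_real, abs_of_pos hδ0]
      exact ⟨hδ0, hδ1⟩
    · simp only [HT, Set.mem_setOf_eq]
      simp [Complex.norm_real, abs_of_pos hε0]
      exact ⟨hε0, hε1⟩
    · rw [KH_real, KH_real]
      have h1 : (0:ℝ) < 1 - ε*δ := by linarith
      have h2 : (0:ℝ) < 1 - δ*δ := by linarith
      have hx : (0:ℝ) < (ε*δ) / (Real.pi ^ 2 * (ε*δ)^2 * (1 - ε*δ)^2) :=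
        div_pos (mul_pos hε0 hδ0)
          (mul_pos (mul_pos (pow_pos hπ 2) (pow_pos (mul_pos hε0 hδ0) 2)) (pow_pos h1 2))
      rw [Complex.norm_real, Real.norm_eq_abs, abs_of_pos hx, Complex.ofReal_re, hf]
      have hne : ε * (1 - δ * ε) ^ 2 ≠ 0 :=
        ne_of_gt (mul_pos hε0 (pow_pos (by linarith) 2))
      have h1' := h1.ne'
      have h2' := h2.ne'
      have hπ' := hπ.ne'
      have hε' := hε0.ne'
      have hδ' := hδ0.ne'
      field_simp
  have := hM hmem
  rw [hf] at this
  linarith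
end

section
/- Let f(z) = 1/z₁ on the Hartogs triangle H and k_z^H the normalized Bergman kernel. Then ⟨f, k_{(1/j,0)}^H⟩ has absolute value π(1 − j^{−2}) for integers j ≥ 2, which converges to π ≠ 0 as j → ∞; hence the sequence of normalized kernels {k_{(1/j,0)}^H} does not converge weakly to 0 in A²(H). -/
open Complex MeasureTheory Filter Metric Set

/-- The pairing of `f(z) = 1/z₁` with the normalized Bergman kernel at `(1/j, 0)`. -/
noncomputable def pairing (j : ℕ) : ℂ :=
  ∫ z in HT, (z.1)⁻¹ * (starRingEnd ℂ)
    (KH z ((1 / (j : ℂ)), 0)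
      / ((Real.sqrt ((KH ((1 / (j : ℂ)), 0) ((1 / (j : ℂ)), 0)).re) : ℝ) : ℂ))

lemma circleAvg {a : ℂ} (ha : ‖a‖ < 1) {r : ℝ} (h0 : 0 < r) (h1 : r < 1) :
    ∫ θ in (0:ℝ)..(2*Real.pi), ((1 - a * circleMap 0 r θ)^2)⁻¹ = (2*Real.pi : ℂ) := by
  set g : ℂ → ℂ := fun z => ((1 - a*z)^2)⁻¹ with hg
  have hne : ∀ z : ℂ, ‖z‖ ≤ 1 → 1 - a*z ≠ 0 := by
    intro z hz h
    have : a * z = 1 := by linear_combination -h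
    have := congrArg (‖·‖) this
    rw [norm_mul, norm_one] at this
    nlinarith [norm_nonneg z, norm_nonneg a]
  have hd : DifferentiableOn ℂ g (closedBall 0 r) := by
    intro z hz
    have hz1 : ‖z‖ ≤ 1 := by
      have := mem_closedBall_zero_iff.mp hz
      simpa using this.trans h1.le
    exact (((differentiableAt_const (1:ℂ)).sub
      ((differentiableAt_id.const_mul a))).pow 2).inv
      (pow_ne_zero _ (hne z hz1)) |>.differentiableWithinAt
  have hc := hd.circleIntegral_sub_inv_smul (w := 0) (by simpa using h0)
  have hg0 : g 0 = 1 := by simp [hg]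
  rw [hg0, smul_eq_mul, mul_one] at hc
  unfold circleIntegral at hc
  simp only [deriv_circleMap, sub_zero, smul_eq_mul] at hc
  have hcm : ∀ θ : ℝ, circleMap 0 r θ * Complex.I *
      ((circleMap 0 r θ)⁻¹ * g (circleMap 0 r θ)) = Complex.I * g (circleMap 0 r θ) := by
    intro θ
    have h2 : circleMap 0 r θ ≠ 0 := circleMap_ne_center h0.ne'
    field_simp
  rw [intervalIntegral.integral_congr (fun θ _ => hcm θ),
    intervalIntegral.integral_const_mul] at hc
  exact mul_left_cancel₀ Complex.I_ne_zero (by rw [hc]; push_cast; ring)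

lemma meanValue {a : ℂ} (ha : ‖a‖ < 1) :
    ∫ z in ball (0:ℂ) 1, ((1 - a*z)^2)⁻¹ = (Real.pi : ℂ) := by
  set g : ℂ → ℂ := fun z => ((1 - a*z)^2)⁻¹ with hg
  have hne : ∀ z : ℂ, ‖z‖ ≤ 1 → 1 - a*z ≠ 0 := by
    intro z hz h
    have : a * z = 1 := by linear_combination -h
    have := congrArg (‖·‖) this
    rw [norm_mul, norm_one] at this
    nlinarith [norm_nonneg z, norm_nonneg a]
  -- pass to polar coordinates
  have h1 : ∫ z in ball (0:ℂ) 1, g z = ∫ z : ℂ, (ball (0:ℂ) 1).indicator g z := by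
    rw [integral_indicator measurableSet_ball]
  rw [h1, ← Complex.integral_comp_polarCoord_symm]
  -- restrict to (0,1) × (-π,π)
  have h2 : ∫ p in polarCoord.target, p.1 • (ball (0:ℂ) 1).indicator g (Complex.polarCoord.symm p)
      = ∫ p in polarCoord.target,
          (Ioo (0:ℝ) 1 ×ˢ Ioo (-Real.pi) Real.pi).indicator
            (fun p => p.1 • g (Complex.polarCoord.symm p)) p := by
    apply setIntegral_congr_fun (by rw [polarCoord_target]; exact measurableSet_Ioi.prod measurableSet_Ioo)
    intro p hp
    rw [polarCoord_target] at hp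
    have hp1 : 0 < p.1 := hp.1
    have habs : ‖Complex.polarCoord.symm p‖ = p.1 := by
      rw [Complex.norm_polarCoord_symm, abs_of_pos hp1]
    dsimp only
    by_cases hlt : p.1 < 1
    · rw [Set.indicator_of_mem, Set.indicator_of_mem]
      · exact ⟨⟨hp1, hlt⟩, hp.2⟩
      · rw [mem_ball_zero_iff, habs]; exact hlt
    · rw [Set.indicator_of_notMem, Set.indicator_of_notMem, smul_zero]
      · rintro ⟨⟨-, h⟩, -⟩; exact hlt h
      · rw [mem_ball_zero_iff, habs]; exact hlt
  rw [h2, setIntegral_indicator (measurableSet_Ioo.prod measurableSet_Ioo)]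
  have h3 : polarCoord.target ∩ (Ioo (0:ℝ) 1 ×ˢ Ioo (-Real.pi) Real.pi)
      = Ioo (0:ℝ) 1 ×ˢ Ioo (-Real.pi) Real.pi := by
    rw [polarCoord_target]
    apply inter_eq_self_of_subset_right
    exact Set.prod_mono_left (Ioo_subset_Ioi_self)
  rw [h3]
  -- integrability on the rectangle
  have hint : IntegrableOn (fun p : ℝ × ℝ => p.1 • g (Complex.polarCoord.symm p))
      (Ioo (0:ℝ) 1 ×ˢ Ioo (-Real.pi) Real.pi) := by
    apply IntegrableOn.mono_set (t := Icc (0:ℝ) 1 ×ˢ Icc (-Real.pi) Real.pi)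
    · apply ContinuousOn.integrableOn_compact (isCompact_Icc.prod isCompact_Icc)
      apply ContinuousOn.smul continuousOn_fst
      apply ContinuousOn.inv₀
      · apply Continuous.continuousOn
        have hcont : Continuous (fun p : ℝ × ℝ => (Complex.polarCoord.symm p : ℂ)) := by
          have heq2 : (fun p : ℝ × ℝ => (Complex.polarCoord.symm p : ℂ))
              = fun p => (p.1:ℂ) * (Real.cos p.2 + Real.sin p.2 * Complex.I) := by
            funext p; exact Complex.polarCoord_symm_apply p
          rw [heq2]; fun_prop
        exact (continuous_const.sub (continuous_const.mul hcont)).pow 2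
      · intro p hp
        apply pow_ne_zero
        apply hne
        rw [Complex.norm_polarCoord_symm]
        rw [_root_.abs_of_nonneg hp.1.1]
        exact hp.1.2
    · exact Set.prod_mono Ioo_subset_Icc_self Ioo_subset_Icc_self
  rw [Measure.volume_eq_prod, setIntegral_prod _ hint]
  -- inner integral
  have h4 : ∀ r ∈ Ioo (0:ℝ) 1,
      ∫ θ in Ioo (-Real.pi) Real.pi, (r, θ).1 • g (Complex.polarCoord.symm (r, θ))
        = r • (2 * Real.pi : ℂ) := by
    intro r hr
    rw [integral_smul]
    congr 1
    have hper : Function.Periodic (fun θ : ℝ => g (circleMap 0 r θ)) (2*Real.pi) :=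
      (periodic_circleMap 0 r).comp g
    have heq : ∀ θ : ℝ, g (Complex.polarCoord.symm (r, θ)) = g (circleMap 0 r θ) := by
      intro θ
      congr 1
      rw [Complex.polarCoord_symm_apply, circleMap_zero, Complex.exp_mul_I]
      push_cast; ring
    calc ∫ θ in Ioo (-Real.pi) Real.pi, g (Complex.polarCoord.symm (r, θ))
        = ∫ θ in Ioo (-Real.pi) Real.pi, g (circleMap 0 r θ) := by
          exact setIntegral_congr_fun measurableSet_Ioo (fun θ _ => heq θ)
      _ = ∫ θ in (-Real.pi)..Real.pi, g (circleMap 0 r θ) := by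
          rw [intervalIntegral.integral_of_le (by linarith [Real.pi_pos]),
            integral_Ioc_eq_integral_Ioo]
      _ = ∫ θ in (0:ℝ)..(2*Real.pi), g (circleMap 0 r θ) := by
          have h6 := hper.intervalIntegral_add_eq (-Real.pi) 0
          simp only [zero_add] at h6
          have hπ : (-Real.pi) + 2*Real.pi = Real.pi := by ring
          rw [hπ] at h6
          exact h6
      _ = (2 * Real.pi : ℂ) := circleAvg ha hr.1 hr.2
  rw [setIntegral_congr_fun measurableSet_Ioo h4]
  rw [integral_smul_const]
  have h5 : ∫ r in Ioo (0:ℝ) 1, r = 1/2 := by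
    rw [← integral_Ioc_eq_integral_Ioo, ← intervalIntegral.integral_of_le zero_le_one]
    simp
  rw [h5, Complex.real_smul]
  push_cast
  ring

lemma htFubini {a : ℝ} (ha0 : 0 < a) (ha : a < 1) :
    ∫ z in HT, ((z.1 * (starRingEnd ℂ) z.1)⁻¹ *
        ((starRingEnd ℂ) ((1 - (a:ℂ) * z.1)^2))⁻¹)
      = (Real.pi : ℂ)^2 := by
  set G : ℂ → ℂ := fun x => (x * (starRingEnd ℂ) x)⁻¹ *
    ((starRingEnd ℂ) ((1 - (a:ℂ) * x)^2))⁻¹ with hGdef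
  have hHT : MeasurableSet HT := by
    have h1 : Measurable (fun z : ℂ × ℂ => ‖z.2‖) :=
      (continuous_norm.comp continuous_snd).measurable
    have h2 : Measurable (fun z : ℂ × ℂ => ‖z.1‖) :=
      (continuous_norm.comp continuous_fst).measurable
    exact (measurableSet_lt h1 h2).inter (measurableSet_lt h2 measurable_const)
  have hconj : Measurable (fun z : ℂ => (starRingEnd ℂ) z) := Complex.continuous_conj.measurable
  have hGm : Measurable G := by
    apply Measurable.mul
    · exact (measurable_id.mul hconj).inv
    · exact ((hconj.comp ((measurable_const.sub (measurable_id.const_mul ((a:ℂ)))).pow_const 2))).inv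
  set f : ℂ × ℂ → ℂ := HT.indicator (fun z => G z.1) with hfdef
  have hfm : AEStronglyMeasurable f (volume : Measure (ℂ × ℂ)) :=
    ((hGm.comp measurable_fst).indicator hHT).aestronglyMeasurable
  have key : ∀ x y : ℂ, f (x, y) =
      if ‖x‖ < 1 then (ball (0:ℂ) (‖x‖)).indicator (fun _ => G x) y
      else 0 := by
    intro x y
    by_cases h1 : ‖x‖ < 1
    · rw [if_pos h1]
      by_cases h2 : ‖y‖ < ‖x‖
      · rw [hfdef, Set.indicator_of_mem (show ((x,y) : ℂ × ℂ) ∈ HT from ⟨h2, h1⟩),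
          Set.indicator_of_mem (by rw [mem_ball_zero_iff]; exact h2)]
      · rw [hfdef, Set.indicator_of_notMem (fun h => h2 h.1), Set.indicator_of_notMem
          (by rw [mem_ball_zero_iff]; exact h2)]
    · rw [if_neg h1, hfdef, Set.indicator_of_notMem (fun h => h1 h.2)]
  have hinner : ∀ x : ℂ, Integrable (fun y => f (x, y)) volume := by
    intro x
    simp only [key x]
    by_cases h1 : ‖x‖ < 1
    · simp only [if_pos h1]
      exact (integrable_indicator_iff measurableSet_ball).mpr
        ((integrableOn_const_iff (by finiteness)).mpr (Or.inr measure_ball_lt_top))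
    · simp only [if_neg h1]
      exact integrable_zero _ _ _
  have hvol : ∀ x : ℂ, (volume (ball (0:ℂ) (‖x‖))).toReal
      = Real.pi * (‖x‖)^2 := by
    intro x
    rw [Complex.volume_ball]
    rw [ENNReal.toReal_mul, ENNReal.toReal_pow, ENNReal.toReal_ofReal (norm_nonneg x)]
    simp [mul_comm]
  have hnorm : (fun x : ℂ => ∫ y, ‖f (x, y)‖) =
      (ball (0:ℂ) 1).indicator (fun x => ‖G x‖ * (Real.pi * (‖x‖)^2)) := by
    funext x
    simp only [key x]
    by_cases h1 : ‖x‖ < 1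
    · simp only [if_pos h1]
      have : (fun y => ‖(ball (0:ℂ) (‖x‖)).indicator (fun _ => G x) y‖)
          = (ball (0:ℂ) (‖x‖)).indicator (fun _ => ‖G x‖) := by
        funext y
        exact norm_indicator_eq_indicator_norm _ _
      simp_rw [this]
      rw [integral_indicator_const _ measurableSet_ball,
        Set.indicator_of_mem (by rwa [mem_ball_zero_iff]), measureReal_def, hvol,
        smul_eq_mul, mul_comm]
    · simp only [if_neg h1, norm_zero, integral_zero]
      rw [Set.indicator_of_notMem (by rwa [mem_ball_zero_iff])]
  have hbound : ∀ x : ℂ, x ∈ ball (0:ℂ) 1 →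
      ‖G x‖ * (Real.pi * (‖x‖)^2) ≤ Real.pi * ((1-a)⁻¹)^2 := by
    intro x hx
    rw [mem_ball_zero_iff] at hx
    set A := ‖x‖ with hA
    set B := ‖1 - (a:ℂ)*x‖ with hB
    have hA0 : 0 ≤ A := norm_nonneg x
    have hBge : 1 - a*A ≤ B := by
      have := norm_sub_norm_le (1 : ℂ) ((a:ℂ)*x)
      simpa [norm_mul, Complex.norm_real, Real.norm_eq_abs, _root_.abs_of_pos ha0] using this
    have hBpos : 0 < B := by nlinarith
    have hGnorm : ‖G x‖ = (A^2)⁻¹ * (B^2)⁻¹ := by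
      rw [hGdef]
      simp only [norm_mul, norm_inv, norm_pow, Complex.norm_conj]
      rw [← hA, ← hB]
      ring
    by_cases hA0' : A = 0
    · rw [hGnorm, hA0']
      simp
      positivity
    · have hApos : 0 < A := lt_of_le_of_ne hA0 (Ne.symm hA0')
      rw [hGnorm]
      have h1 : (A^2)⁻¹ * (B^2)⁻¹ * (Real.pi * A^2) = Real.pi * (B^2)⁻¹ := by
        field_simp
      rw [h1]
      have h2 : (1-a) ≤ B := by nlinarith
      have h3 : (B^2)⁻¹ ≤ ((1-a)⁻¹)^2 := by
        rw [← one_div, ← one_div, div_pow, one_pow]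
        gcongr
      have := Real.pi_pos
      nlinarith
  have hnormInt : Integrable (fun x : ℂ => ∫ y, ‖f (x, y)‖) volume := by
    rw [hnorm, integrable_indicator_iff measurableSet_ball]
    apply Measure.integrableOn_of_bounded (M := Real.pi * ((1-a)⁻¹)^2)
      (μ := volume) measure_ball_lt_top.ne
      ((hGm.norm.mul ((measurable_const.mul
        ((continuous_norm.measurable.pow_const 2))))).aestronglyMeasurable)
    filter_upwards [ae_restrict_mem measurableSet_ball] with x hx
    simp only [Pi.mul_apply]
    rw [Real.norm_eq_abs, _root_.abs_of_nonneg (mul_nonneg (norm_nonneg _) (mul_nonneg Real.pi_pos.le (sq_nonneg _)))]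
    exact hbound x hx
  have hInt : Integrable f ((volume : Measure ℂ).prod volume) := by
    refine (integrable_prod_iff ?_).mpr ⟨ae_of_all _ hinner, hnormInt⟩
    rw [← Measure.volume_eq_prod]
    exact hfm
  have hInner2 : ∀ x : ℂ, ∫ y, f (x, y) =
      (ball (0:ℂ) 1).indicator (fun x => (Real.pi * (‖x‖)^2) • G x) x := by
    intro x
    simp only [key x]
    by_cases h1 : ‖x‖ < 1
    · simp only [if_pos h1]
      rw [integral_indicator_const _ measurableSet_ball, measureReal_def, hvol,
        Set.indicator_of_mem (by rwa [mem_ball_zero_iff])]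
    · simp only [if_neg h1, integral_zero]
      rw [Set.indicator_of_notMem (by rwa [mem_ball_zero_iff])]
  have step1 : ∫ z in HT, G z.1 = ∫ z : ℂ × ℂ, f z := (integral_indicator hHT).symm
  rw [step1, Measure.volume_eq_prod, integral_prod _ hInt]
  simp only [hInner2]
  rw [integral_indicator measurableSet_ball]
  have h0 : ∀ᵐ (x : ℂ), x ≠ 0 := by
    rw [ae_iff]
    have : {x : ℂ | ¬ x ≠ 0} = {0} := by ext x; simp
    rw [this, measure_singleton]
  have hzero : ∀ᵐ x : ℂ ∂volume, x ∈ ball (0:ℂ) 1 →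
      (Real.pi * (‖x‖)^2) • G x
        = Real.pi • (starRingEnd ℂ) (((1 - (a:ℂ)*x)^2)⁻¹) := by
    filter_upwards [h0] with x hx0 _
    rw [hGdef]
    simp only
    rw [Complex.real_smul, Complex.real_smul, map_inv₀, Complex.mul_conj,
      Complex.ofReal_mul, Complex.sq_norm]
    have hns : (Complex.normSq x : ℂ) ≠ 0 := by
      exact_mod_cast (Complex.normSq_pos.mpr hx0).ne'
    have haux : ∀ u v w : ℂ, u ≠ 0 → w * u * (u⁻¹ * v) = w * v := by
      intro u v w hu
      field_simp
    exact haux _ _ _ hns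
  rw [setIntegral_congr_ae measurableSet_ball hzero, integral_smul, integral_conj]
  have ha' : ‖((a:ℝ):ℂ)‖ < 1 := by
    rwa [Complex.norm_real, Real.norm_eq_abs, _root_.abs_of_pos ha0]
  rw [meanValue ha', Complex.conj_ofReal, Complex.real_smul]
  ring


lemma htMeasurable : MeasurableSet HT := by
  have h1 : Measurable (fun z : ℂ × ℂ => ‖z.2‖) :=
    (continuous_norm.comp continuous_snd).measurable
  have h2 : Measurable (fun z : ℂ × ℂ => ‖z.1‖) :=
    (continuous_norm.comp continuous_fst).measurable
  exact (measurableSet_lt h1 h2).inter (measurableSet_lt h2 measurable_const)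

lemma pairing_eq {j : ℕ} (hj : 2 ≤ j) :
    pairing j = ((Real.pi * (1 - 1/(j:ℝ)^2) : ℝ) : ℂ) := by
  have hj0 : (0:ℝ) < j := by exact_mod_cast (by omega : 0 < j)
  have h2j : (2:ℝ) ≤ j := by exact_mod_cast hj
  obtain ⟨a, hadef⟩ : ∃ a : ℝ, a = 1/(j:ℝ) := ⟨_, rfl⟩
  have ha0 : 0 < a := by rw [hadef]; positivity
  have ha2 : a ≤ 1/2 := by
    rw [hadef, div_le_div_iff₀ hj0 (by norm_num)]
    linarith
  have ha1 : a < 1 := lt_of_le_of_lt ha2 (by norm_num)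
  have hπ := Real.pi_pos
  have h1a2 : 0 < 1 - a^2 := by nlinarith
  have hcast : (1/(j:ℂ)) = ((a:ℝ):ℂ) := by rw [hadef]; push_cast; ring
  have hπc : (Real.pi : ℂ) ≠ 0 := by exact_mod_cast Real.pi_ne_zero
  have hac : ((a:ℝ):ℂ) ≠ 0 := by exact_mod_cast ha0.ne'
  have h1a2c : (1:ℂ) - ((a:ℝ):ℂ)^2 ≠ 0 := by
    have : ((1 - a^2 : ℝ) : ℂ) ≠ 0 := by exact_mod_cast h1a2.ne'
    push_cast at this
    convert this using 2
  have h1a2c' : (1:ℂ) - ((a:ℝ):ℂ)*((a:ℝ):ℂ) ≠ 0 := by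
    intro h; apply h1a2c; rw [← h]; ring
  have hKww : KH ((1/(j:ℂ)),0) ((1/(j:ℂ)),0)
      = ((1/(Real.pi^2*a^2*(1-a^2)^2) : ℝ) : ℂ) := by
    rw [hcast]
    unfold KH
    simp only [Complex.conj_ofReal, map_zero, mul_zero, sub_zero]
    push_cast
    field_simp [hπc, hac, h1a2c, h1a2c']
  have hsq : Real.sqrt ((KH ((1/(j:ℂ)),0) ((1/(j:ℂ)),0)).re)
      = 1/(Real.pi*a*(1-a^2)) := by
    rw [hKww, Complex.ofReal_re,
      show 1/(Real.pi^2*a^2*(1-a^2)^2) = (1/(Real.pi*a*(1-a^2)))^2 by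
        rw [div_pow, one_pow]; congr 1; ring]
    exact Real.sqrt_sq (by positivity)
  have hpair : pairing j = (((1-a^2)/Real.pi : ℝ) : ℂ) •
      ∫ z in HT, ((z.1 * (starRingEnd ℂ) z.1)⁻¹ *
        ((starRingEnd ℂ) ((1 - (a:ℂ) * z.1)^2))⁻¹) := by
    unfold pairing
    rw [hsq, hcast, ← integral_smul]
    apply setIntegral_congr_fun htMeasurable
    intro z hz
    have hz1 := hz.1
    have hz2 := hz.2
    have hz10 : z.1 ≠ 0 := by
      intro h
      rw [h] at hz1
      simp only [norm_zero] at hz1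
      exact (norm_nonneg z.2).not_gt hz1
    have hc0 : (starRingEnd ℂ) z.1 ≠ 0 := fun h => hz10 (by
      have := congrArg (starRingEnd ℂ) h
      simpa using this)
    have hne : (1 : ℂ) - z.1 * ((a:ℝ):ℂ) ≠ 0 := by
      intro h
      have h' : z.1 * ((a:ℝ):ℂ) = 1 := by linear_combination -h
      have := congrArg (‖·‖) h'
      rw [norm_mul, norm_one, Complex.norm_real, Real.norm_eq_abs, _root_.abs_of_pos ha0] at this
      nlinarith [norm_nonneg z.1]
    have hcne : (1:ℂ) - ((a:ℝ):ℂ) * (starRingEnd ℂ) z.1 ≠ 0 := by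
      intro h
      apply hne
      have := congrArg (starRingEnd ℂ) h
      simp only [map_sub, map_mul, map_one, map_zero, Complex.conj_conj,
        Complex.conj_ofReal] at this
      rw [← this]; ring
    have hcne' : (1:ℂ) - (starRingEnd ℂ) z.1 * ((a:ℝ):ℂ) ≠ 0 := by
      intro h; apply hcne; rw [← h]; ring
    unfold KH
    simp only [Complex.conj_ofReal, map_zero, mul_zero, sub_zero, smul_eq_mul]
    rw [map_div₀, map_div₀]
    simp only [map_mul, map_pow, map_sub, map_one, Complex.conj_conj,
      Complex.conj_ofReal]
    push_cast
    field_simp [hz10, hc0, hπc, hac, hcne, hcne', h1a2c, h1a2c']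
  rw [hpair, htFubini ha0 ha1, smul_eq_mul, hadef]
  have hjc : ((j:ℝ):ℂ) ≠ 0 := by exact_mod_cast hj0.ne'
  push_cast
  field_simp

lemma tendsto_aux :
    Tendsto (fun j : ℕ => Real.pi * (1 - 1 / (j : ℝ) ^ 2)) atTop (nhds Real.pi) := by
  have h1 : Tendsto (fun j : ℕ => 1/(j:ℝ)^2) atTop (nhds 0) := by
    have := (tendsto_one_div_atTop_nhds_zero_nat (𝕜 := ℝ)).pow 2
    simpa [one_div, ← inv_pow] using this
  have h2 := (tendsto_const_nhds (x := (1:ℝ)) (f := atTop)).sub h1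
  have h3 := h2.const_mul Real.pi
  simpa using h3

theorem stmt19 :
    (∀ j : ℕ, 2 ≤ j → ‖pairing j‖ = Real.pi * (1 - 1 / (j : ℝ) ^ 2))
    ∧ Tendsto (fun j : ℕ => Real.pi * (1 - 1 / (j : ℝ) ^ 2)) atTop (nhds Real.pi)
    ∧ Real.pi ≠ 0
    ∧ ¬ Tendsto pairing atTop (nhds 0) := by
  have habs : ∀ j : ℕ, 2 ≤ j → ‖pairing j‖ = Real.pi * (1 - 1/(j:ℝ)^2) := by
    intro j hj
    have hj0 : (0:ℝ) < j := by exact_mod_cast (by omega : 0 < j)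
    have h2j : (2:ℝ) ≤ j := by exact_mod_cast hj
    rw [pairing_eq hj, Complex.norm_real, Real.norm_eq_abs, _root_.abs_of_pos]
    have h1 : 1/(j:ℝ)^2 ≤ 1/4 := by
      apply div_le_div_of_nonneg_left (by norm_num) (by norm_num)
      nlinarith
    nlinarith [Real.pi_pos]
  refine ⟨habs, tendsto_aux, Real.pi_ne_zero, ?_⟩
  intro h
  have h1 : Tendsto (fun j => ‖pairing j‖) atTop (nhds 0) := by
    have := (continuous_norm.tendsto 0).comp h
    simpa [Function.comp_def] using this
  have h3 : (fun j => ‖pairing j‖) =ᶠ[atTop]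
      (fun j : ℕ => Real.pi * (1 - 1/(j:ℝ)^2)) := by
    filter_upwards [eventually_ge_atTop 2] with j hj
    exact habs j hj
  have h4 := tendsto_nhds_unique (h1.congr' h3) tendsto_aux
  exact Real.pi_ne_zero h4.symm
end
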